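/- Let A ∈ ℝ^{n×n}, Λ = I_n − A, σ ∈ [0,1] and h > 0. Let u : ℝ → ℝ^n be continuous and let x : ℝ → ℝ^n be differentiable with x′(t) = A·x(t) + σΛ·u(t) + (1−σ)Λ·u(t−h) for all t. Define z(t) = x(t) + (1−σ)·∫_{t−h}^{t} exp(A(t−h−s))·Λ·u(s) ds. Then z is differentiable and z′(t) = A·z(t) + 𝒜·u(t) for all t, where 𝒜 = σΛ + (1−σ)·exp(−Ah)·Λ. -/

import Mathlib

open Matrix intervalIntegral

/-- The memory transformation: if `x' = Ax + σΛu(t) + (1-σ)Λu(t-h)` and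
`z(t) = x(t) + (1-σ)∫_{t-h}^{t} e^{A(t-h-s)} Λ u(s) ds`, then
`z' = Az + 𝒜u` with `𝒜 = σΛ + (1-σ)e^{-Ah}Λ`. -/
theorem stmt12 {n : ℕ}
    (A : Matrix (Fin n) (Fin n) ℝ)
    (σ h : ℝ) (hσ : σ ∈ Set.Icc (0 : ℝ) 1) (hh : 0 < h)
    (Λ : Matrix (Fin n) (Fin n) ℝ) (hΛ : Λ = 1 - A)
    (𝒜 : Matrix (Fin n) (Fin n) ℝ)
    (h𝒜 : 𝒜 = σ • Λ + (1 - σ) • (NormedSpace.exp (-(h • A)) * Λ))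
    (u : ℝ → Fin n → ℝ) (hu : Continuous u)
    (x : ℝ → Fin n → ℝ)
    (hx : ∀ t : ℝ, HasDerivAt x
      (A *ᵥ x t + σ • (Λ *ᵥ u t) + (1 - σ) • (Λ *ᵥ u (t - h))) t)
    (z : ℝ → Fin n → ℝ)
    (hz : ∀ t : ℝ, z t = x t +
      (1 - σ) • ∫ s in (t - h)..t, (NormedSpace.exp ((t - h - s) • A)) *ᵥ (Λ *ᵥ u s)) :
    ∀ t : ℝ, HasDerivAt z (A *ᵥ z t + 𝒜 *ᵥ u t) t := by
  letI : NormedRing (Matrix (Fin n) (Fin n) ℝ) := Matrix.linftyOpNormedRing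
  letI : NormedAlgebra ℝ (Matrix (Fin n) (Fin n) ℝ) := Matrix.linftyOpNormedAlgebra
  letI : CompleteSpace (Matrix (Fin n) (Fin n) ℝ) := FiniteDimensional.complete ℝ _
  -- the exponential as a function
  set E : ℝ → Matrix (Fin n) (Fin n) ℝ := fun t => NormedSpace.exp (t • A) with hE
  have hEmul : ∀ a b : ℝ, E (a + b) = E a * E b := by
    intro a b
    have hc : Commute (a • A) (b • A) := ((Commute.refl A).smul_right b).smul_left a
    rw [hE]; simp only [add_smul]
    exact NormedSpace.exp_add_of_commute_of_mem_ball (𝕂 := ℝ) hc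
      ((NormedSpace.expSeries_radius_eq_top ℝ (Matrix (Fin n) (Fin n) ℝ)).symm ▸ edist_lt_top _ _)
      ((NormedSpace.expSeries_radius_eq_top ℝ (Matrix (Fin n) (Fin n) ℝ)).symm ▸ edist_lt_top _ _)
  have hEd : ∀ t : ℝ, HasDerivAt E (A * E t) t := fun t => hasDerivAt_exp_smul_const' A t
  have hEc : Continuous E :=
    continuous_iff_continuousAt.2 fun t => (hEd t).continuousAt
  -- mulVec as a continuous bilinear map
  let T : Matrix (Fin n) (Fin n) ℝ →L[ℝ] (Fin n → ℝ) →L[ℝ] (Fin n → ℝ) :=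
    LinearMap.toContinuousLinearMap
      { toFun := fun M => LinearMap.toContinuousLinearMap (Matrix.mulVecLin M)
        map_add' := fun M N => by ext v; simp [Matrix.add_mulVec]
        map_smul' := fun c M => by ext v; simp [Matrix.smul_mulVec] }
  have hT : ∀ (M : Matrix (Fin n) (Fin n) ℝ) (v : Fin n → ℝ), T M v = M *ᵥ v := fun _ _ => rfl
  -- the fixed integrand
  set f : ℝ → Fin n → ℝ := fun s => E (-s) *ᵥ (Λ *ᵥ u s) with hf
  have hfc : Continuous f := by
    have h1 : Continuous fun s : ℝ => T (E (-s)) :=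
      T.continuous.comp (hEc.comp continuous_neg)
    have h2 : Continuous fun s : ℝ => T Λ (u s) := (T Λ).continuous.comp hu
    exact h1.clm_apply h2
  have hfi : ∀ a b : ℝ, IntervalIntegrable f MeasureTheory.volume a b := fun a b =>
    hfc.intervalIntegrable a b
  set V : ℝ → Fin n → ℝ := fun t => ∫ s in (0 : ℝ)..t, f s with hV
  have hVd : ∀ t : ℝ, HasDerivAt V (f t) t := fun t =>
    intervalIntegral.integral_hasDerivAt_right (hfi 0 t)
      hfc.stronglyMeasurable.stronglyMeasurableAtFilter hfc.continuousAt
  set g : ℝ → Fin n → ℝ := fun t => T (E (t - h)) (V t - V (t - h)) with hg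
  -- z equals x + (1-σ) • g
  have hVdiff : ∀ t : ℝ, V t - V (t - h) = ∫ s in (t - h)..t, f s := by
    intro t
    have := integral_add_adjacent_intervals (hfi 0 (t - h)) (hfi (t - h) t)
    rw [hV]; dsimp only
    rw [← this, add_sub_cancel_left]
  have hzz : ∀ t : ℝ, z t = x t + (1 - σ) • g t := by
    intro t
    rw [hz t]
    congr 2
    have hker : ∀ s : ℝ, (NormedSpace.exp ((t - h - s) • A)) *ᵥ (Λ *ᵥ u s)
        = T (E (t - h)) (f s) := by
      intro s
      rw [hT]
      show _ = E (t - h) *ᵥ (E (-s) *ᵥ (Λ *ᵥ u s))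
      conv_rhs => rw [Matrix.mulVec_mulVec, ← hEmul]
      have hts : t - h + -s = t - h - s := by ring
      rw [hts]
    calc (∫ s in (t - h)..t, (NormedSpace.exp ((t - h - s) • A)) *ᵥ (Λ *ᵥ u s))
        = ∫ s in (t - h)..t, T (E (t - h)) (f s) :=
          intervalIntegral.integral_congr fun s _ => hker s
      _ = T (E (t - h)) (∫ s in (t - h)..t, f s) :=
          (T (E (t - h))).intervalIntegral_comp_comm (hfi _ _)
      _ = g t := by rw [← hVdiff t]
  -- derivative of g
  have hgd : ∀ t : ℝ, HasDerivAt g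
      (T (A * E (t - h)) (V t - V (t - h)) + T (E (t - h)) (f t - f (t - h))) t := by
    intro t
    have hsub : HasDerivAt (fun t : ℝ => t - h) 1 t := (hasDerivAt_id t).sub_const h
    have hΦ : HasDerivAt (fun t : ℝ => T (E (t - h))) (T (A * E (t - h))) t := by
      have h1 : HasDerivAt (fun t : ℝ => E (t - h)) (A * E (t - h)) t := by
        have := (hEd (t - h)).scomp t hsub
        simp only [one_smul, Function.comp_def] at this
        exact this
      exact T.hasFDerivAt.comp_hasDerivAt t h1
    have hVc : HasDerivAt (fun t : ℝ => V t - V (t - h)) (f t - f (t - h)) t := by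
      have h2 : HasDerivAt (fun t : ℝ => V (t - h)) (f (t - h)) t := by
        have := (hVd (t - h)).scomp t hsub
        simp only [one_smul, Function.comp_def] at this
        exact this
      exact (hVd t).sub h2
    exact hΦ.clm_apply hVc
  intro t
  -- algebraic identities for the derivative
  have e1 : T (A * E (t - h)) (V t - V (t - h)) = A *ᵥ g t := by
    show (A * E (t - h)) *ᵥ (V t - V (t - h)) = A *ᵥ (E (t - h) *ᵥ (V t - V (t - h)))
    rw [Matrix.mulVec_mulVec]
  have e2 : E (t - h) *ᵥ f t = NormedSpace.exp (-(h • A)) *ᵥ (Λ *ᵥ u t) := by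
    show E (t - h) *ᵥ (E (-t) *ᵥ (Λ *ᵥ u t)) = _
    rw [Matrix.mulVec_mulVec, ← hEmul]
    have hts : t - h + -t = -h := by ring
    rw [hts, hE]
    dsimp only
    rw [neg_smul]
  have e3 : E (t - h) *ᵥ f (t - h) = Λ *ᵥ u (t - h) := by
    show E (t - h) *ᵥ (E (-(t - h)) *ᵥ (Λ *ᵥ u (t - h))) = _
    rw [Matrix.mulVec_mulVec, ← hEmul]
    have hts : t - h + -(t - h) = 0 := by ring
    rw [hts, hE]
    dsimp only
    rw [zero_smul, NormedSpace.exp_zero, Matrix.one_mulVec]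
  have e4 : T (E (t - h)) (f t - f (t - h))
      = NormedSpace.exp (-(h • A)) *ᵥ (Λ *ᵥ u t) - Λ *ᵥ u (t - h) := by
    rw [hT, Matrix.mulVec_sub, e2, e3]
  have hderiv_eq : A *ᵥ z t + 𝒜 *ᵥ u t
      = (A *ᵥ x t + σ • (Λ *ᵥ u t) + (1 - σ) • (Λ *ᵥ u (t - h)))
        + (1 - σ) • (T (A * E (t - h)) (V t - V (t - h)) + T (E (t - h)) (f t - f (t - h))) := by
    rw [hzz t, e1, e4, h𝒜, Matrix.mulVec_add, Matrix.mulVec_smul, Matrix.add_mulVec,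
      Matrix.smul_mulVec, Matrix.smul_mulVec, ← Matrix.mulVec_mulVec]
    module
  have hzfun : z = fun t => x t + (1 - σ) • g t := funext hzz
  rw [hderiv_eq, hzfun]
  exact (hx t).add ((hgd t).const_smul (1 - σ))
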